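/- Let C be a semiabelian category, A an object of C, and let i' : A' ⟶ A and i'' : A'' ⟶ A be strict monomorphisms. Set v := i'' ≫ cokernel.π i' : A'' ⟶ cokernel i' and k := kernel.ι v ≫ i'' : kernel v ⟶ A. Then: (1) k is a strict monomorphism; (2) k factors through i'' (namely via kernel.ι v) and k factors through i', i.e. there is a morphism w : kernel v ⟶ A' with w ≫ i' = k; and (3) for every strict monomorphism x : X ⟶ A such that x factors through i' and x factors through i'', x factors through k. Hence (kernel v, k) is the infimum of the strict subobjects (A', i') and (A'', i'') in the preordered class of strict subobjects of A. -/

import Mathlib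

open CategoryTheory CategoryTheory.Limits

section Aux

variable {C : Type*} [Category C] [Preadditive C] [HasZeroObject C]
  [HasKernels C] [HasCokernels C]

/-- A strict mono has the lifting property against morphisms killed by its cokernel. -/
lemma aux_lift {X Y T : C} (f : X ⟶ Y) [Mono f]
    (hf : IsIso (Abelian.coimageImageComparison f))
    (g : T ⟶ Y) (hg : g ≫ cokernel.π f = 0) : ∃ t : T ⟶ X, t ≫ f = g := by
  have hπ : IsIso (Abelian.coimage.π f) := cokernel.of_kernel_of_mono f
  set e : X ⟶ Abelian.image f := Abelian.coimage.π f ≫ Abelian.coimageImageComparison f with he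
  have hei : IsIso e := by infer_instance
  have hfe : e ≫ Abelian.image.ι f = f := by
    rw [he, Category.assoc, Abelian.coimage_image_factorisation]
  refine ⟨kernel.lift (cokernel.π f) g hg ≫ inv e, ?_⟩
  have h3 : inv e ≫ f = Abelian.image.ι f := by rw [IsIso.inv_comp_eq]; exact hfe.symm
  rw [Category.assoc, h3]
  exact kernel.lift_ι _ _ _

/-- If a mono factors as an iso followed by a kernel inclusion, its
coimage-image comparison is an isomorphism. -/
lemma aux_strict {X Y Z : C} (f : X ⟶ Y) [Mono f] {g : Y ⟶ Z}
    (e : X ⟶ kernel g) (he : IsIso e) (hfe : e ≫ kernel.ι g = f) :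
    IsIso (Abelian.coimageImageComparison f) := by
  have hπ : IsIso (Abelian.coimage.π f) := cokernel.of_kernel_of_mono f
  -- kernel.ι g ≫ cokernel.π f = 0
  have h1 : kernel.ι g ≫ cokernel.π f = 0 := by
    have : e ≫ kernel.ι g ≫ cokernel.π f = 0 := by
      rw [← Category.assoc, hfe, cokernel.condition]
    rwa [← cancel_epi e, comp_zero]
  -- Abelian.image.ι f ≫ g = 0
  have h2 : Abelian.image.ι f ≫ g = 0 := by
    have hfg : f ≫ g = 0 := by rw [← hfe, Category.assoc, kernel.condition, comp_zero]
    have : g = cokernel.π f ≫ cokernel.desc f g hfg := (cokernel.π_desc _ _ _).symm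
    rw [this, ← Category.assoc, kernel.condition, zero_comp]
  set m : kernel g ⟶ Abelian.image f := kernel.lift (cokernel.π f) (kernel.ι g) h1 with hm
  set n : Abelian.image f ⟶ kernel g := kernel.lift g (Abelian.image.ι f) h2 with hn
  have hmι : m ≫ Abelian.image.ι f = kernel.ι g := kernel.lift_ι _ _ _
  have hnι : n ≫ kernel.ι g = Abelian.image.ι f := kernel.lift_ι _ _ _
  have hmn : m ≫ n = 𝟙 _ := by
    rw [← cancel_mono (kernel.ι g), Category.assoc, hnι, hmι, Category.id_comp]
  have hnm : n ≫ m = 𝟙 _ := by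
    rw [← cancel_mono (Abelian.image.ι f), Category.assoc, hmι, hnι, Category.id_comp]
  have hmi : IsIso m := ⟨n, hmn, hnm⟩
  -- the canonical factorization
  have hlift : Abelian.coimage.π f ≫ Abelian.coimageImageComparison f = e ≫ m := by
    rw [← cancel_mono (Abelian.image.ι f), Category.assoc, Category.assoc,
      Abelian.coimage_image_factorisation, hmι, hfe]
  have : Abelian.coimageImageComparison f = inv (Abelian.coimage.π f) ≫ e ≫ m := by
    rw [← hlift, IsIso.inv_hom_id_assoc]
  rw [this]
  infer_instance

end Aux

theorem stmt10 {C : Type*} [Category C] [Preadditive C] [HasZeroObject C]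
    [HasKernels C] [HasCokernels C] [HasFiniteProducts C]
    (hsemi : ∀ {X Y : C} (f : X ⟶ Y),
      Mono (Abelian.coimageImageComparison f) ∧ Epi (Abelian.coimageImageComparison f))
    {A A' A'' : C} (i' : A' ⟶ A) (i'' : A'' ⟶ A) [Mono i'] [Mono i'']
    (h' : IsIso (Abelian.coimageImageComparison i'))
    (h'' : IsIso (Abelian.coimageImageComparison i''))
    (v : A'' ⟶ cokernel i') (hv : v = i'' ≫ cokernel.π i')
    (k : kernel v ⟶ A) (hk : k = kernel.ι v ≫ i'') :
    (Mono k ∧ IsIso (Abelian.coimageImageComparison k)) ∧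
    (kernel.ι v ≫ i'' = k ∧ ∃ w : kernel v ⟶ A', w ≫ i' = k) ∧
    (∀ (X : C) (x : X ⟶ A), Mono x → IsIso (Abelian.coimageImageComparison x) →
      (∃ t : X ⟶ A', x = t ≫ i') → (∃ t : X ⟶ A'', x = t ≫ i'') →
      ∃ t : X ⟶ kernel v, x = t ≫ k) := by
  have hmk : Mono k := by rw [hk]; exact mono_comp _ _
  have hkp' : k ≫ cokernel.π i' = 0 := by
    rw [hk, Category.assoc, ← hv, kernel.condition]
  have hkp'' : k ≫ cokernel.π i'' = 0 := by
    rw [hk, Category.assoc, cokernel.condition, comp_zero]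
  -- q : A ⟶ cokernel i' ⨯ cokernel i''
  set q : A ⟶ (cokernel i') ⨯ (cokernel i'') :=
    prod.lift (cokernel.π i') (cokernel.π i'') with hq
  have hkq : k ≫ q = 0 := by
    rw [hq]; ext
    · simp [hkp', prod.lift_fst]
    · simp [hkp'', prod.lift_snd]
  set e : kernel v ⟶ kernel q := kernel.lift q k hkq with heq
  have heι : e ≫ kernel.ι q = k := kernel.lift_ι _ _ _
  -- kernel.ι q kills cokernel.π i''
  have hq'' : kernel.ι q ≫ cokernel.π i'' = 0 := by
    have := kernel.condition q
    have h2 := congrArg (· ≫ (prod.snd : (cokernel i') ⨯ (cokernel i'') ⟶ _)) this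
    simpa [hq, prod.lift_snd] using h2
  obtain ⟨s, hs⟩ := aux_lift i'' h'' (kernel.ι q) hq''
  have hq' : kernel.ι q ≫ cokernel.π i' = 0 := by
    have := kernel.condition q
    have h2 := congrArg (· ≫ (prod.fst : (cokernel i') ⨯ (cokernel i'') ⟶ _)) this
    simpa [hq, prod.lift_fst] using h2
  have hsv : s ≫ v = 0 := by rw [hv, ← Category.assoc, hs, hq']
  set r : kernel q ⟶ kernel v := kernel.lift v s hsv with hr
  have hrι : r ≫ kernel.ι v = s := kernel.lift_ι _ _ _
  have hrk : r ≫ k = kernel.ι q := by rw [hk, ← Category.assoc, hrι, hs]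
  have her : e ≫ r = 𝟙 _ := by
    rw [← cancel_mono k, Category.assoc, hrk, heι, Category.id_comp]
  have hre : r ≫ e = 𝟙 _ := by
    rw [← cancel_mono (kernel.ι q), Category.assoc, heι, hrk, Category.id_comp]
  have hei : IsIso e := ⟨r, her, hre⟩
  have hstrict : IsIso (Abelian.coimageImageComparison k) := aux_strict k e hei heι
  refine ⟨⟨hmk, hstrict⟩, ⟨hk.symm, ?_⟩, ?_⟩
  · exact aux_lift i' h' k hkp'
  · rintro X x _ _ ⟨t', ht'⟩ ⟨t'', ht''⟩
    have htv : t'' ≫ v = 0 := by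
      rw [hv, ← Category.assoc, ← ht'', ht', Category.assoc, cokernel.condition, comp_zero]
    refine ⟨kernel.lift v t'' htv, ?_⟩
    rw [hk, ← Category.assoc, kernel.lift_ι, ht'']
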